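/- Let 𝒜 be a noetherian abelian category and Z a stability function on 𝒜 such that the image of the generalized rank R = Im ∘ Z (over all objects of 𝒜) is a discrete subset of ℝ. Then for every object E of 𝒜 there exists a real number D_E such that D(F) ≤ D_E for every subobject F ⊆ E. -/
import Mathlib


open CategoryTheory CategoryTheory.Limits

namespace BridgelandNotes

variable {𝒜 : Type*} [Category 𝒜] [Abelian 𝒜]

/-- `Z` is additive on short exact sequences:
`Z(E) = Z(F) + Z(G)` whenever `0 → F → E → G → 0` is exact in `𝒜`. -/
def AdditiveOnSES (Z : 𝒜 → ℂ) : Prop :=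
  ∀ S : ShortComplex 𝒜, S.ShortExact → Z S.X₂ = Z S.X₁ + Z S.X₃

/-- `Z` is a stability function on the abelian category `𝒜`: it is additive on short
exact sequences, every nonzero object satisfies `Im Z(E) ≥ 0`, and `Im Z(E) = 0`
implies `Re Z(E) < 0`. -/
def IsStabilityFunction (Z : 𝒜 → ℂ) : Prop :=
  AdditiveOnSES Z ∧
    ∀ E : 𝒜, ¬ IsZero E → 0 ≤ (Z E).im ∧ ((Z E).im = 0 → (Z E).re < 0)

/-- The generalized rank `R(E) := Im Z(E)`. -/
def genR (Z : 𝒜 → ℂ) (E : 𝒜) : ℝ := (Z E).im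

/-- The generalized degree `D(E) := -Re Z(E)`. -/
def genD (Z : 𝒜 → ℂ) (E : 𝒜) : ℝ := -(Z E).re

/-- The slope inequality `μ(A) ≤ μ(B)`, encoded for nonzero objects by
cross-multiplication: `D(A)·R(B) ≤ D(B)·R(A)`. -/
def SlopeLE (Z : 𝒜 → ℂ) (A B : 𝒜) : Prop :=
  genD Z A * genR Z B ≤ genD Z B * genR Z A

/-- The strict slope inequality `μ(A) < μ(B)`, encoded for nonzero objects by
cross-multiplication: `D(A)·R(B) < D(B)·R(A)`. -/
def SlopeLT (Z : 𝒜 → ℂ) (A B : 𝒜) : Prop :=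
  genD Z A * genR Z B < genD Z B * genR Z A

/-- A nonzero object `E` is `Z`-semistable if `μ(F) ≤ μ(E)` for every nonzero proper
subobject `F` of `E`. -/
def IsSemistable (Z : 𝒜 → ℂ) (E : 𝒜) : Prop :=
  ¬ IsZero E ∧
    ∀ (F : 𝒜) (f : F ⟶ E), Mono f → ¬ IsZero F → ¬ IsIso f → SlopeLE Z F E

/-- The abelian category `𝒜` is noetherian: every ascending chain of subobjects of
any object stabilizes. -/
def NoetherianCategory (𝒜 : Type*) [Category 𝒜] [Abelian 𝒜] : Prop :=
  ∀ (E : 𝒜) (f : ℕ →o Subobject E), ∃ N : ℕ, ∀ n : ℕ, N ≤ n → f n = f N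

/-- The image of the generalized rank `R = Im ∘ Z` is a discrete subset of `ℝ`. -/
def HasDiscreteRank (Z : 𝒜 → ℂ) : Prop :=
  ∀ x ∈ Set.range (genR Z), ∃ ε > (0 : ℝ), ∀ y ∈ Set.range (genR Z), |y - x| < ε → y = x

/-- The subquotient `T/S` of two nested subobjects `S ≤ T` of an object of `𝒜`. -/
noncomputable def subquot {E : 𝒜} (S T : Subobject E) (h : S ≤ T) : 𝒜 :=
  cokernel (Subobject.ofLE S T h)

section Aux

variable (Z : 𝒜 → ℂ)

lemma Z_of_isZero (hadd : AdditiveOnSES Z) {A : 𝒜} (hA : IsZero A) : Z A = 0 := by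
  have h0 : (0 : A ⟶ A) = 𝟙 A := hA.eq_of_src _ _
  have hmono : Mono (0 : A ⟶ A) := by rw [h0]; infer_instance
  have hepi : Epi (0 : A ⟶ A) := by rw [h0]; infer_instance
  have hse : (ShortComplex.mk (0 : A ⟶ A) (0 : A ⟶ A) (by simp)).ShortExact :=
    { exact := ShortComplex.exact_of_isZero_X₂ _ hA
      mono_f := hmono
      epi_g := hepi }
  have h : Z A = Z A + Z A := hadd _ hse
  exact (left_eq_add.mp h)

lemma Z_mono (hadd : AdditiveOnSES Z) {A B : 𝒜} (f : A ⟶ B) [Mono f] :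
    Z B = Z A + Z (cokernel f) := by
  have hse : (ShortComplex.mk f (cokernel.π f) (cokernel.condition f)).ShortExact :=
    { exact := ShortComplex.exact_of_g_is_cokernel _ (cokernelIsCokernel f) }
  exact hadd _ hse

lemma Z_iso (hadd : AdditiveOnSES Z) {A B : 𝒜} (e : A ≅ B) : Z A = Z B := by
  have h := Z_mono Z hadd e.hom
  rw [Z_of_isZero Z hadd ((isZero_zero 𝒜).of_iso (cokernel.ofEpi e.hom)), add_zero] at h
  exact h.symm

lemma genR_nonneg (hZ : IsStabilityFunction Z) (A : 𝒜) : 0 ≤ genR Z A := by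
  by_cases h : IsZero A
  · simp [genR, Z_of_isZero Z hZ.1 h]
  · exact (hZ.2 A h).1

lemma genD_nonneg_of_genR_eq_zero (hZ : IsStabilityFunction Z) {A : 𝒜} (h : genR Z A = 0) :
    0 ≤ genD Z A := by
  by_cases hA : IsZero A
  · simp [genD, Z_of_isZero Z hZ.1 hA]
  · have := (hZ.2 A hA).2 h
    simp only [genD]
    linarith

lemma genR_add_of_mono (hadd : AdditiveOnSES Z) {A B : 𝒜} (f : A ⟶ B) [Mono f] :
    genR Z B = genR Z A + genR Z (cokernel f) := by
  simp [genR, Z_mono Z hadd f]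

lemma genD_add_of_mono (hadd : AdditiveOnSES Z) {A B : 𝒜} (f : A ⟶ B) [Mono f] :
    genD Z B = genD Z A + genD Z (cokernel f) := by
  simp only [genD, Z_mono Z hadd f, Complex.add_re]
  ring

lemma genR_le_of_mono (hZ : IsStabilityFunction Z) {A B : 𝒜} (f : A ⟶ B) [Mono f] :
    genR Z A ≤ genR Z B := by
  have h1 := genR_add_of_mono Z hZ.1 f
  have h2 := genR_nonneg Z hZ (cokernel f)
  linarith

lemma genD_le_of_mono_rank_eq (hZ : IsStabilityFunction Z) {A B : 𝒜} (f : A ⟶ B) [Mono f]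
    (h : genR Z A = genR Z B) : genD Z A ≤ genD Z B := by
  have h1 := genR_add_of_mono Z hZ.1 f
  have h2 := genD_add_of_mono Z hZ.1 f
  have h3 := genD_nonneg_of_genR_eq_zero Z hZ (A := cokernel f) (by linarith)
  linarith

lemma Z_ker_im (hadd : AdditiveOnSES Z) {A B : 𝒜} (g : A ⟶ B) :
    Z A = Z (kernel g) + Z (Abelian.image g) := by
  have h := Z_mono Z hadd (kernel.ι g)
  have h2 : Z (cokernel (kernel.ι g)) = Z (Abelian.image g) :=
    Z_iso Z hadd (Abelian.coimageIsoImage g)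
  rw [h2] at h
  exact h

lemma Z_epi (hadd : AdditiveOnSES Z) {A B : 𝒜} (e : A ⟶ B) [Epi e] :
    Z A = Z (kernel e) + Z B := by
  have h := Z_ker_im Z hadd e
  haveI hepi : Epi (Abelian.image.ι e) := by
    haveI : Epi (Abelian.factorThruImage e ≫ Abelian.image.ι e) := by
      rw [Abelian.image.fac]; infer_instance
    exact epi_of_epi (Abelian.factorThruImage e) _
  haveI : IsIso (Abelian.image.ι e) := isIso_of_mono_of_epi _
  rw [Z_iso Z hadd (asIso (Abelian.image.ι e))] at h
  exact h

lemma Z_biprod (hadd : AdditiveOnSES Z) (A B : 𝒜) : Z (A ⊞ B) = Z A + Z B := by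
  have h := Z_mono Z hadd (biprod.inl : A ⟶ A ⊞ B)
  have h2 : Z (cokernel (biprod.inl : A ⟶ A ⊞ B)) = Z B :=
    Z_iso Z hadd cokernelBiprodInlIso
  rw [h2] at h
  exact h

lemma genR_sup_le (hZ : IsStabilityFunction Z) {X : 𝒜} (S T : Subobject X) :
    genR Z ((S ⊔ T : Subobject X) : 𝒜) ≤ genR Z (S : 𝒜) + genR Z (T : 𝒜) := by
  set c : ((S : 𝒜) ⊞ (T : 𝒜)) ⟶ X := biprod.desc S.arrow T.arrow with hc
  have hS : S ≤ Subobject.mk (Abelian.image.ι c) := by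
    refine Subobject.le_mk_of_comm (biprod.inl ≫ Abelian.factorThruImage c) ?_
    rw [Category.assoc, Abelian.image.fac, hc, biprod.inl_desc]
  have hT : T ≤ Subobject.mk (Abelian.image.ι c) := by
    refine Subobject.le_mk_of_comm (biprod.inr ≫ Abelian.factorThruImage c) ?_
    rw [Category.assoc, Abelian.image.fac, hc, biprod.inr_desc]
  have hsup : S ⊔ T ≤ Subobject.mk (Abelian.image.ι c) := sup_le hS hT
  have h1 : genR Z ((S ⊔ T : Subobject X) : 𝒜) ≤
      genR Z ((Subobject.mk (Abelian.image.ι c) : Subobject X) : 𝒜) :=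
    genR_le_of_mono Z hZ (Subobject.ofLE _ _ hsup)
  have h2 : genR Z ((Subobject.mk (Abelian.image.ι c) : Subobject X) : 𝒜)
      = genR Z (Abelian.image c) := by
    simp [genR, Z_iso Z hZ.1 (Subobject.underlyingIso (Abelian.image.ι c))]
  have h3 : genR Z ((S : 𝒜) ⊞ (T : 𝒜)) =
      genR Z (kernel (Abelian.factorThruImage c)) + genR Z (Abelian.image c) := by
    simp [genR, Z_epi Z hZ.1 (Abelian.factorThruImage c)]
  have h4 : genR Z ((S : 𝒜) ⊞ (T : 𝒜)) = genR Z (S : 𝒜) + genR Z (T : 𝒜) := by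
    simp [genR, Z_biprod Z hZ.1]
  have h5 := genR_nonneg Z hZ (kernel (Abelian.factorThruImage c))
  linarith

lemma D_le_of_mono_bound (hadd : AdditiveOnSES Z) {A : 𝒜} {M : ℝ}
    (h : ∀ F : Subobject A, genD Z (F : 𝒜) ≤ M) {K : 𝒜} (m : K ⟶ A) [Mono m] :
    genD Z K ≤ M := by
  have h2 : genD Z ((Subobject.mk m : Subobject A) : 𝒜) = genD Z K := by
    simp [genD, Z_iso Z hadd (Subobject.underlyingIso m)]
  linarith [h (Subobject.mk m)]

lemma exists_maximal (hNoeth : NoetherianCategory 𝒜) (X : 𝒜) (𝒮 : Set (Subobject X))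
    (hne : 𝒮.Nonempty) : ∃ T ∈ 𝒮, ∀ F ∈ 𝒮, ¬ T < F := by
  by_contra hcon
  push_neg at hcon
  choose! next hmem hlt using hcon
  obtain ⟨s₀, hs₀⟩ := hne
  let g : ℕ → Subobject X := fun n => Nat.recAux s₀ (fun _ p => next p) n
  have hgmem : ∀ n, g n ∈ 𝒮 := by
    intro n
    induction n with
    | zero => exact hs₀
    | succ n ih => exact hmem _ ih
  have hglt : ∀ n, g n < g (n + 1) := fun n => hlt _ (hgmem n)
  have hsm : StrictMono g := strictMono_nat_of_lt_succ hglt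
  obtain ⟨N, hN⟩ := hNoeth X ⟨g, hsm.monotone⟩
  exact absurd (hN (N + 1) (Nat.le_succ N)) (ne_of_gt (hglt N))

lemma bounded_of_no_intermediate (hZ : IsStabilityFunction Z) (hNoeth : NoetherianCategory 𝒜)
    (X : 𝒜) (h : ∀ F : Subobject X, genR Z (F : 𝒜) = 0 ∨ genR Z (F : 𝒜) = genR Z X) :
    ∃ M : ℝ, ∀ F : Subobject X, genD Z (F : 𝒜) ≤ M := by
  have hbot : genR Z ((⊥ : Subobject X) : 𝒜) = 0 := by
    simp [genR, Z_of_isZero Z hZ.1 ((isZero_zero 𝒜).of_iso Subobject.botCoeIsoZero)]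
  obtain ⟨T, hT0, hTmax⟩ := exists_maximal hNoeth X {F | genR Z (F : 𝒜) = 0} ⟨⊥, hbot⟩
  refine ⟨max (genD Z X) (genD Z (T : 𝒜)), ?_⟩
  intro F
  rcases h F with h0 | hX
  · -- rank 0 case: F ≤ T
    have hsup0 : genR Z ((F ⊔ T : Subobject X) : 𝒜) = 0 := by
      have hle := genR_sup_le Z hZ F T
      have hge := genR_nonneg Z hZ ((F ⊔ T : Subobject X) : 𝒜)
      rw [h0, hT0] at hle
      linarith
    have heq : T = F ⊔ T := by
      rcases lt_or_eq_of_le (le_sup_right : T ≤ F ⊔ T) with hlt | he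
      · exact absurd hlt (hTmax _ hsup0)
      · exact he
    have hle : F ≤ T := by
      rw [heq]
      exact le_sup_left
    have := genD_le_of_mono_rank_eq Z hZ (Subobject.ofLE F T hle) (by rw [h0, hT0])
    exact le_trans this (le_max_right _ _)
  · -- full rank case: D F ≤ D X
    have := genD_le_of_mono_rank_eq Z hZ F.arrow hX
    exact le_trans this (le_max_left _ _)

lemma bounded_of_rank_le (hZ : IsStabilityFunction Z) (hNoeth : NoetherianCategory 𝒜)
    {ε : ℝ} (hε : 0 < ε) (hmin : ∀ A : 𝒜, genR Z A ≠ 0 → ε ≤ genR Z A) :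
    ∀ n : ℕ, ∀ X : 𝒜, genR Z X ≤ (n : ℝ) * ε →
      ∃ M : ℝ, ∀ F : Subobject X, genD Z (F : 𝒜) ≤ M := by
  intro n
  induction n with
  | zero =>
    intro X hX
    apply bounded_of_no_intermediate Z hZ hNoeth
    intro F
    left
    have h1 := genR_le_of_mono Z hZ F.arrow
    have h2 := genR_nonneg Z hZ (F : 𝒜)
    simp only [Nat.cast_zero, zero_mul] at hX
    linarith
  | succ n ih =>
    intro X hX
    push_cast at hX
    by_cases hexists : ∃ F₀ : Subobject X, 0 < genR Z (F₀ : 𝒜) ∧ genR Z (F₀ : 𝒜) < genR Z X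
    · obtain ⟨F₀, hpos, hlt⟩ := hexists
      have hsum := genR_add_of_mono Z hZ.1 F₀.arrow
      have hQpos : 0 < genR Z (cokernel F₀.arrow) := by linarith
      have hF₀ε : ε ≤ genR Z (F₀ : 𝒜) := hmin _ (ne_of_gt hpos)
      have hQε : ε ≤ genR Z (cokernel F₀.arrow) := hmin _ (ne_of_gt hQpos)
      obtain ⟨M₁, hM₁⟩ := ih (F₀ : 𝒜) (by linarith)
      obtain ⟨M₂, hM₂⟩ := ih (cokernel F₀.arrow) (by linarith)
      refine ⟨M₁ + M₂, ?_⟩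
      intro F
      set g : (F : 𝒜) ⟶ cokernel F₀.arrow := F.arrow ≫ cokernel.π F₀.arrow with hg
      have hD : genD Z (F : 𝒜) = genD Z (kernel g) + genD Z (Abelian.image g) := by
        simp only [genD, Z_ker_im Z hZ.1 g, Complex.add_re]
        ring
      have himg : genD Z (Abelian.image g) ≤ M₂ :=
        D_le_of_mono_bound Z hZ.1 hM₂ (Abelian.image.ι g)
      have hz : (kernel.ι g ≫ F.arrow) ≫ cokernel.π F₀.arrow = 0 := by
        rw [Category.assoc, ← hg]
        exact kernel.condition g
      set m : (kernel g : 𝒜) ⟶ (F₀ : 𝒜) := Abelian.monoLift F₀.arrow (kernel.ι g ≫ F.arrow) hz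
        with hm
      haveI : Mono (m ≫ F₀.arrow) := by
        rw [hm, Abelian.monoLift_comp]
        infer_instance
      haveI : Mono m := mono_of_mono m F₀.arrow
      have hker : genD Z (kernel g) ≤ M₁ := D_le_of_mono_bound Z hZ.1 hM₁ m
      linarith
    · push_neg at hexists
      apply bounded_of_no_intermediate Z hZ hNoeth
      intro F
      by_cases h0 : genR Z (F : 𝒜) = 0
      · exact Or.inl h0
      · right
        have h1 := genR_le_of_mono Z hZ F.arrow
        have h2 := genR_nonneg Z hZ (F : 𝒜)
        have h3 := hexists F (lt_of_le_of_ne h2 (Ne.symm h0))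
        linarith

end Aux

/-- If `𝒜` is noetherian and the image of the generalized rank is discrete in `ℝ`,
then for every object `E` the generalized degrees of subobjects of `E` are bounded
from above. -/
theorem degree_bounded (Z : 𝒜 → ℂ) (hZ : IsStabilityFunction Z)
    (hNoeth : NoetherianCategory 𝒜) (hDisc : HasDiscreteRank Z) (E : 𝒜) :
    ∃ DE : ℝ, ∀ F : Subobject E, genD Z (F : 𝒜) ≤ DE := by
  have h0mem : (0 : ℝ) ∈ Set.range (genR Z) := by
    refine ⟨((⊥ : Subobject E) : 𝒜), ?_⟩
    simp [genR, Z_of_isZero Z hZ.1 ((isZero_zero 𝒜).of_iso Subobject.botCoeIsoZero)]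
  obtain ⟨ε, hε, hsep⟩ := hDisc 0 h0mem
  have hmin : ∀ A : 𝒜, genR Z A ≠ 0 → ε ≤ genR Z A := by
    intro A hA
    by_contra hlt
    push_neg at hlt
    exact hA (hsep _ ⟨A, rfl⟩ (by rw [sub_zero, abs_of_nonneg (genR_nonneg Z hZ A)]; exact hlt))
  obtain ⟨n, hn⟩ := exists_nat_ge (genR Z E / ε)
  have hnE : genR Z E ≤ (n : ℝ) * ε := by
    rw [div_le_iff₀ hε] at hn
    exact hn
  exact bounded_of_rank_le Z hZ hNoeth hε hmin n E hnE

end BridgelandNotes
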